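/- arXiv:1012.4079 — 5 statements merged into one kernel-verified Lean document; each statement's English description precedes it below -/
import Mathlib

section
/- Let G be a finite group (possibly nonabelian) and H a finite abelian group. A function f: G → H is perfect nonlinear (i.e., for every α ≠ e in G, the derivative x ↦ f(αx)f(x)⁻¹ is balanced) if and only if for every irreducible unitary representation ρ: G → U(V) of G and every β ∈ H with β ≠ e, the endomorphism T = Σ_{x∈G} χ_β(f(x)) ρ(x) satisfies T ∘ T* = |G| · Id_V. -/
/-- `f` is balanced: every fiber has cardinality `|X| / |H|`. -/
def IsBalanced {X H : Type} [Fintype X] [Fintype H] (f : X → H) : Prop :=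
  ∀ y : H, Nat.card {x : X // f x = y} * Fintype.card H = Fintype.card X

/-- `f : G → H` is perfect nonlinear: every nontrivial left derivative is balanced. -/
def IsPerfectNonlinear {G H : Type} [Group G] [Fintype G] [Group H] [Fintype H]
    (f : G → H) : Prop :=
  ∀ α : G, α ≠ 1 → IsBalanced (fun x : G => f (α * x) * (f x)⁻¹)



open Finset

section Chars
variable {H : Type} [CommGroup H] [Fintype H]

lemma char_norm_one (ψ : H →* ℂ) (h : H) : ‖ψ h‖ = 1 := by
  have h1 : (ψ h) ^ orderOf h = 1 := by
    rw [← map_pow, pow_orderOf_eq_one, map_one]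
  have h2 : ‖ψ h‖ ^ orderOf h = 1 := by
    rw [← norm_pow, h1, norm_one]
  exact Complex.norm_eq_one_of_pow_eq_one h1 (orderOf_pos h).ne' 

lemma char_conj (ψ : H →* ℂ) (h : H) : (starRingEnd ℂ) (ψ h) = ψ h⁻¹ := by
  have hz : ψ h * ψ h⁻¹ = 1 := by rw [← map_mul, mul_inv_cancel, map_one]
  have hn : (starRingEnd ℂ) (ψ h) * ψ h = 1 := by
    rw [Complex.conj_mul', char_norm_one]
    norm_num
  have : (starRingEnd ℂ) (ψ h) * (ψ h * ψ h⁻¹) = (starRingEnd ℂ) (ψ h) := by rw [hz, mul_one]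
  rw [← mul_assoc, hn, one_mul] at this
  exact this.symm

lemma char_sum_eq_zero {M : Type} [Group M] [Fintype M] (ψ : M →* ℂ) (hψ : ψ ≠ 1) :
    ∑ m : M, ψ m = 0 := by
  obtain ⟨m0, hm0⟩ : ∃ m0, ψ m0 ≠ 1 := by
    by_contra h
    push_neg at h
    exact hψ (MonoidHom.ext fun m => h m)
  have key : ψ m0 * ∑ m : M, ψ m = ∑ m : M, ψ m := by
    rw [Finset.mul_sum]
    exact Fintype.sum_equiv (Equiv.mulLeft m0) _ _ fun m => by simp [← map_mul]
  have := sub_eq_zero.mpr key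
  rw [← sub_one_mul] at this
  rcases mul_eq_zero.mp this with h | h
  · exact absurd (by linear_combination h) hm0
  · exact h

end Chars

section Sep
variable {H : Type} [CommGroup H] [Fintype H]

lemma char_separates (χ : H ≃* (H →* ℂ)) {k : H} (hk : k ≠ 1) : ∃ β : H, χ β k ≠ 1 := by
  classical
  by_contra hc
  push_neg at hc
  have li : LinearIndependent ℂ (fun β : H => ((χ β : H →* ℂ) : H → ℂ)) :=
    (linearIndependent_monoidHom H ℂ).comp (fun β => χ β)
      (fun a b hab => χ.injective hab)
  have hcard : Fintype.card H = Module.finrank ℂ (H → ℂ) := by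
    simp [Module.finrank_pi]
  have hsp := li.span_eq_top_of_card_eq_finrank hcard
  set L : (H → ℂ) →ₗ[ℂ] ℂ := (LinearMap.proj k : (H → ℂ) →ₗ[ℂ] ℂ) - (LinearMap.proj (1 : H) : (H → ℂ) →ₗ[ℂ] ℂ) with hL
  have hker : ∀ v : H → ℂ, L v = 0 := by
    have hle : Submodule.span ℂ (Set.range fun β : H => ((χ β : H →* ℂ) : H → ℂ))
        ≤ LinearMap.ker L := by
      rw [Submodule.span_le]
      rintro _ ⟨β, rfl⟩
      simp [hL, hc β, LinearMap.proj]
    rw [hsp] at hle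
    intro v
    exact hle (Submodule.mem_top (x := v))
  have := hker (Pi.single (1 : H) (1 : ℂ))
  simp [hL, LinearMap.proj, Pi.single_apply, hk] at this

open scoped Classical in
lemma char_orth (χ : H ≃* (H →* ℂ)) (k : H) :
    ∑ β : H, χ β k = if k = 1 then (Fintype.card H : ℂ) else 0 := by
  split_ifs with h
  · subst h; simp
  · obtain ⟨β0, hβ0⟩ := char_separates χ h
    set ψk : H →* ℂ :=
      { toFun := fun β => χ β k
        map_one' := by simp
        map_mul' := fun a b => by simp } with hψk
    have hne : ψk ≠ 1 := by
      intro hcon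
      exact hβ0 (by simpa [hψk] using congrArg (fun F => F β0) hcon)
    simpa [hψk] using char_sum_eq_zero ψk hne

end Sep

section Rep
variable {G H : Type} [Group G] [Fintype G] [CommGroup H] [Fintype H]
variable {V : Type} [NormedAddCommGroup V] [InnerProductSpace ℂ V] [FiniteDimensional ℂ V]

lemma adjoint_rho (ρ : Representation ℂ G V)
    (hinner : ∀ (g : G) (u v : V), (inner ℂ (ρ g u) (ρ g v) : ℂ) = inner ℂ u v) (g : G) :
    LinearMap.adjoint (ρ g) = ρ g⁻¹ := by
  symm
  rw [LinearMap.eq_adjoint_iff]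
  intro x y
  have : (inner ℂ (ρ g⁻¹ x) y : ℂ) = inner ℂ (ρ g (ρ g⁻¹ x)) (ρ g y) := (hinner g _ _).symm
  rw [this]
  congr 1
  rw [← Module.End.mul_apply, ← map_mul, mul_inv_cancel, map_one, Module.End.one_apply]

lemma TTstar (χ : H ≃* (H →* ℂ)) (f : G → H) (β : H) (ρ : Representation ℂ G V)
    (hinner : ∀ (g : G) (u v : V), (inner ℂ (ρ g u) (ρ g v) : ℂ) = inner ℂ u v) :
    (∑ x : G, χ β (f x) • ρ x) ∘ₗ LinearMap.adjoint (∑ x : G, χ β (f x) • ρ x)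
      = ∑ α : G, (∑ y : G, χ β (f (α * y) * (f y)⁻¹)) • ρ α := by
  have hadj : LinearMap.adjoint (∑ x : G, χ β (f x) • ρ x)
      = ∑ y : G, χ β ((f y)⁻¹) • ρ y⁻¹ := by
    rw [map_sum]
    refine Finset.sum_congr rfl fun y _ => ?_
    rw [LinearEquiv.map_smulₛₗ LinearMap.adjoint, adjoint_rho ρ hinner, char_conj]
  rw [hadj, ← Module.End.mul_eq_comp, Finset.sum_mul_sum]
  have step : ∀ x y : G, (χ β (f x) • ρ x) * (χ β ((f y)⁻¹) • ρ y⁻¹)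
      = (χ β (f x * (f y)⁻¹)) • ρ (x * y⁻¹) := by
    intro x y
    rw [smul_mul_assoc, mul_smul_comm, smul_smul, ← map_mul, ← map_mul]
  calc ∑ x : G, ∑ y : G, (χ β (f x) • ρ x) * (χ β ((f y)⁻¹) • ρ y⁻¹)
      = ∑ y : G, ∑ x : G, (χ β (f x * (f y)⁻¹)) • ρ (x * y⁻¹) := by
        rw [Finset.sum_comm]
        exact Finset.sum_congr rfl fun y _ => Finset.sum_congr rfl fun x _ => step x y
    _ = ∑ y : G, ∑ α : G, (χ β (f (α * y) * (f y)⁻¹)) • ρ α := by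
        refine Finset.sum_congr rfl fun y _ => ?_
        refine (Fintype.sum_equiv (Equiv.mulRight y) _ _ fun α => ?_).symm
        simp [mul_inv_cancel_right]
    _ = ∑ α : G, (∑ y : G, χ β (f (α * y) * (f y)⁻¹)) • ρ α := by
        rw [Finset.sum_comm]
        exact Finset.sum_congr rfl fun α _ => (Finset.sum_smul).symm

end Rep


section Bal
variable {H : Type} [CommGroup H] [Fintype H]

lemma balanced_char_sum {X : Type} [Fintype X] (D : X → H) (hD : IsBalanced D)
    (ψ : H →* ℂ) (hψ : ψ ≠ 1) : ∑ x : X, ψ (D x) = 0 := by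
  classical
  have h1 : ∑ x : X, ψ (D x) = ∑ h : H, (Nat.card {x : X // D x = h} : ℂ) * ψ h := by
    rw [← Fintype.sum_fiberwise D (fun x => ψ (D x))]
    refine Finset.sum_congr rfl fun h _ => ?_
    have : ∀ a : {x : X // D x = h}, ψ (D a.1) = ψ h := fun a => by rw [a.2]
    rw [Finset.sum_congr rfl fun a _ => this a, Finset.sum_const, Finset.card_univ,
      Nat.card_eq_fintype_card, nsmul_eq_mul]
  have h2 : (Fintype.card H : ℂ) * ∑ x : X, ψ (D x) = 0 := by
    rw [h1, Finset.mul_sum]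
    have : ∀ h : H, (Fintype.card H : ℂ) * ((Nat.card {x : X // D x = h} : ℂ) * ψ h)
        = (Fintype.card X : ℂ) * ψ h := by
      intro h
      have := hD h
      rw [← mul_assoc, mul_comm (Fintype.card H : ℂ), ← Nat.cast_mul, this]
    rw [Finset.sum_congr rfl fun h _ => this h, ← Finset.mul_sum,
      char_sum_eq_zero ψ hψ, mul_zero]
  have hH : (Fintype.card H : ℂ) ≠ 0 := Nat.cast_ne_zero.mpr Fintype.card_ne_zero
  exact (mul_eq_zero.mp h2).resolve_left hH

lemma chi_ne_one (χ : H ≃* (H →* ℂ)) {β : H} (hβ : β ≠ 1) : χ β ≠ 1 := by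
  intro h
  exact hβ (χ.injective (by rw [h, map_one]))

end Bal

section Fwd
variable {G H : Type} [Group G] [Fintype G] [CommGroup H] [Fintype H]
variable {V : Type} [NormedAddCommGroup V] [InnerProductSpace ℂ V] [FiniteDimensional ℂ V]

lemma forward_dir (χ : H ≃* (H →* ℂ)) (f : G → H) (hf : IsPerfectNonlinear f)
    (ρ : Representation ℂ G V)
    (hinner : ∀ (g : G) (u v : V), (inner ℂ (ρ g u) (ρ g v) : ℂ) = inner ℂ u v)
    (β : H) (hβ : β ≠ 1) :
    (∑ x : G, χ β (f x) • ρ x) ∘ₗ LinearMap.adjoint (∑ x : G, χ β (f x) • ρ x)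
      = (Fintype.card G : ℂ) • (LinearMap.id : V →ₗ[ℂ] V) := by
  rw [TTstar χ f β ρ hinner]
  rw [Fintype.sum_eq_single (1 : G) (fun α hα => ?_)]
  · have h1 : ∑ y : G, χ β (f (1 * y) * (f y)⁻¹) = (Fintype.card G : ℂ) := by
      have : ∀ y : G, χ β (f (1 * y) * (f y)⁻¹) = 1 := fun y => by
        rw [one_mul, mul_inv_cancel, map_one]
      rw [Finset.sum_congr rfl fun y _ => this y, Finset.sum_const, Finset.card_univ,
        nsmul_eq_mul, mul_one]
    rw [h1, map_one, Module.End.one_eq_id]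
  · rw [balanced_char_sum _ (hf α hα) (χ β) (chi_ne_one χ hβ), zero_smul]

end Fwd

section Reg
variable {G : Type} [Group G] [Fintype G] [DecidableEq G]

/-- Left regular representation on `EuclideanSpace ℂ G`. -/
def regHom (g : G) : EuclideanSpace ℂ G →ₗ[ℂ] EuclideanSpace ℂ G where
  toFun v := WithLp.toLp 2 (fun x => v (g⁻¹ * x) : G → ℂ)
  map_add' u v := (WithLp.ext_iff 2).mpr (funext fun x => rfl)
  map_smul' c v := (WithLp.ext_iff 2).mpr (funext fun x => rfl)

@[simp] lemma regHom_apply (g : G) (v : EuclideanSpace ℂ G) (x : G) :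
    regHom g v x = v (g⁻¹ * x) := rfl

def reg : Representation ℂ G (EuclideanSpace ℂ G) where
  toFun := regHom
  map_one' := LinearMap.ext fun v => (WithLp.ext_iff 2).mpr (funext fun x => by
    show v (1⁻¹ * x) = v x
    rw [inv_one, one_mul])
  map_mul' g h := LinearMap.ext fun v => (WithLp.ext_iff 2).mpr (funext fun x => by
    show v ((g * h)⁻¹ * x) = v (h⁻¹ * (g⁻¹ * x))
    rw [mul_inv_rev, mul_assoc])

@[simp] lemma reg_apply (g : G) (v : EuclideanSpace ℂ G) (x : G) :
    reg g v x = v (g⁻¹ * x) := rfl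

lemma reg_inner (g : G) (u v : EuclideanSpace ℂ G) :
    (inner ℂ (reg g u) (reg g v) : ℂ) = inner ℂ u v := by
  rw [PiLp.inner_apply, PiLp.inner_apply]
  exact Fintype.sum_equiv (Equiv.mulLeft g⁻¹) _ _ fun x => rfl

end Reg

section InvSub
variable {G : Type} [Group G] [Fintype G] [DecidableEq G]

def RInv (U : Submodule ℂ (EuclideanSpace ℂ G)) : Prop :=
  ∀ (g : G) (v : EuclideanSpace ℂ G), v ∈ U → reg g v ∈ U

lemma reg_inv_reg (g : G) (v : EuclideanSpace ℂ G) : reg g⁻¹ (reg g v) = v := by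
  rw [← Module.End.mul_apply, ← map_mul, inv_mul_cancel, map_one, Module.End.one_apply]

lemma RInv.orthogonal {U : Submodule ℂ (EuclideanSpace ℂ G)} (hU : RInv U) : RInv Uᗮ := by
  intro g v hv
  rw [Submodule.mem_orthogonal]
  intro u hu
  have h1 : (inner ℂ (reg g⁻¹ u) (reg g⁻¹ (reg g v)) : ℂ) = inner ℂ u (reg g v) := reg_inner _ _ _
  rw [reg_inv_reg] at h1
  rw [← h1]
  exact (Submodule.mem_orthogonal _ _).mp hv _ (hU g⁻¹ u hu)

lemma exists_minimal_inv :
    ∀ (n : ℕ) (U : Submodule ℂ (EuclideanSpace ℂ G)), Module.finrank ℂ U ≤ n →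
      RInv U → U ≠ ⊥ →
      ∃ S : Submodule ℂ (EuclideanSpace ℂ G), S ≤ U ∧ RInv S ∧ S ≠ ⊥ ∧
        ∀ W : Submodule ℂ (EuclideanSpace ℂ G), W ≤ S → RInv W → W = ⊥ ∨ W = S := by
  intro n
  induction n with
  | zero =>
    intro U hr hU hne
    exact absurd (Submodule.finrank_eq_zero.mp (Nat.le_zero.mp hr)) hne
  | succ n ih =>
    intro U hr hU hne
    by_cases hmin : ∀ W : Submodule ℂ (EuclideanSpace ℂ G), W ≤ U → RInv W → W = ⊥ ∨ W = U
    · exact ⟨U, le_refl _, hU, hne, hmin⟩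
    · push_neg at hmin
      obtain ⟨W, hWU, hWinv, hWb, hWt⟩ := hmin
      have hlt : W < U := lt_of_le_of_ne hWU hWt
      have : Module.finrank ℂ W ≤ n := by
        have := Submodule.finrank_lt_finrank_of_lt hlt
        omega
      obtain ⟨S, hSW, h2, h3, h4⟩ := ih W this hWinv hWb
      exact ⟨S, le_trans hSW hWU, h2, h3, h4⟩

lemma vanish_of_vanish_on_minimal (A : EuclideanSpace ℂ G →ₗ[ℂ] EuclideanSpace ℂ G)
    (hA : ∀ S : Submodule ℂ (EuclideanSpace ℂ G), RInv S → S ≠ ⊥ →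
      (∀ W : Submodule ℂ (EuclideanSpace ℂ G), W ≤ S → RInv W → W = ⊥ ∨ W = S) →
      ∀ v ∈ S, A v = 0) :
    A = 0 := by
  suffices h : ∀ (n : ℕ) (U : Submodule ℂ (EuclideanSpace ℂ G)), Module.finrank ℂ U ≤ n →
      RInv U → ∀ v ∈ U, A v = 0 by
    refine LinearMap.ext fun v => ?_
    rw [LinearMap.zero_apply]
    exact h (Module.finrank ℂ (⊤ : Submodule ℂ (EuclideanSpace ℂ G))) ⊤ (le_refl _)
      (fun g v _ => Submodule.mem_top) v Submodule.mem_top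
  intro n
  induction n with
  | zero =>
    intro U hr _ v hv
    rw [Submodule.finrank_eq_zero.mp (Nat.le_zero.mp hr)] at hv
    rw [Submodule.mem_bot] at hv
    rw [hv, map_zero]
  | succ n ih =>
    intro U hr hU v hv
    by_cases hne : U = ⊥
    · rw [hne, Submodule.mem_bot] at hv; rw [hv, map_zero]
    obtain ⟨S, hSU, hSinv, hSne, hSmin⟩ :=
      exists_minimal_inv (n + 1) U hr hU hne
    have hproj := S.sub_starProjection_mem_orthogonal v
    have hvS : (S.orthogonalProjectionOnto v : EuclideanSpace ℂ G) ∈ S := SetLike.coe_mem _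
    have hsub : v - S.orthogonalProjectionOnto v ∈ U ⊓ Sᗮ :=
      ⟨Submodule.sub_mem U hv (hSU hvS), hproj⟩
    have hU' : RInv (U ⊓ Sᗮ) := fun g w hw => ⟨hU g w hw.1, RInv.orthogonal hSinv g w hw.2⟩
    have hlt : U ⊓ Sᗮ < U := by
      refine lt_of_le_of_ne inf_le_left fun hEq => ?_
      have h1 : S ≤ Sᗮ := le_trans hSU (le_trans hEq.symm.le inf_le_right)
      exact hSne ((Submodule.orthogonal_disjoint S).eq_bot_of_le h1)
    have hrk : Module.finrank ℂ (U ⊓ Sᗮ : Submodule ℂ (EuclideanSpace ℂ G)) ≤ n := by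
      have h1 := Submodule.finrank_lt_finrank_of_lt hlt
      omega
    have h2 : A (v - S.orthogonalProjectionOnto v) = 0 := ih _ hrk hU' _ hsub
    have h3 : A (S.orthogonalProjectionOnto v : EuclideanSpace ℂ G) = 0 :=
      hA S hSinv hSne hSmin _ hvS
    have : A v = A (S.orthogonalProjectionOnto v : EuclideanSpace ℂ G)
        + A (v - S.orthogonalProjectionOnto v) := by
      rw [← map_add]
      congr 1
      abel
    rw [this, h2, h3, add_zero]

end InvSub

section Res
variable {G : Type} [Group G] [Fintype G] [DecidableEq G]

noncomputable def resRep (S : Submodule ℂ (EuclideanSpace ℂ G)) (hS : RInv S) : Representation ℂ G S where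
  toFun g := (reg g).restrict (fun v hv => hS g v hv)
  map_one' := LinearMap.ext fun v => Subtype.ext (by
    rw [LinearMap.restrict_coe_apply, map_one, Module.End.one_apply, Module.End.one_apply])
  map_mul' g h := LinearMap.ext fun v => Subtype.ext (by
    rw [LinearMap.restrict_coe_apply, map_mul, Module.End.mul_apply, Module.End.mul_apply,
      LinearMap.restrict_coe_apply, LinearMap.restrict_coe_apply])

@[simp] lemma resRep_coe (S : Submodule ℂ (EuclideanSpace ℂ G)) (hS : RInv S) (g : G)
    (v : S) : (resRep S hS g v : EuclideanSpace ℂ G) = reg g (v : EuclideanSpace ℂ G) :=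
  LinearMap.restrict_coe_apply (reg g) (fun v hv => hS g v hv) v

lemma resRep_inner (S : Submodule ℂ (EuclideanSpace ℂ G)) (hS : RInv S) (g : G) (u v : S) :
    @inner ℂ S InnerProductSpace.toInner (resRep S hS g u) (resRep S hS g v)
      = @inner ℂ S InnerProductSpace.toInner u v := by
  rw [Submodule.coe_inner, Submodule.coe_inner, resRep_coe, resRep_coe]
  exact reg_inner g _ _

lemma resRep_irred (S : Submodule ℂ (EuclideanSpace ℂ G)) (hS : RInv S) (hSne : S ≠ ⊥)
    (hSmin : ∀ W : Submodule ℂ (EuclideanSpace ℂ G), W ≤ S → RInv W → W = ⊥ ∨ W = S) :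
    Nontrivial S ∧
      ∀ U : Submodule ℂ S, (∀ (g : G) (v : S), v ∈ U → resRep S hS g v ∈ U) →
        U = ⊥ ∨ U = ⊤ := by
  constructor
  · exact Submodule.nontrivial_iff_ne_bot.mpr hSne
  · intro U hUinv
    have hle : U.map S.subtype ≤ S := by
      rintro _ ⟨u, _, rfl⟩
      exact u.2
    have hinv : RInv (U.map S.subtype) := by
      rintro g _ ⟨u, hu, rfl⟩
      exact ⟨resRep S hS g u, hUinv g u hu, (resRep_coe S hS g u).symm⟩
    rcases hSmin _ hle hinv with h | h
    · left
      apply Submodule.map_injective_of_injective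
        (show Function.Injective S.subtype from Subtype.coe_injective)
      rw [h, Submodule.map_bot]
    · right
      apply Submodule.map_injective_of_injective
        (show Function.Injective S.subtype from Subtype.coe_injective)
      rw [h, Submodule.map_subtype_top]

end Res

section Conv
variable {G H : Type} [Group G] [Fintype G] [DecidableEq G] [CommGroup H] [Fintype H]

def evalMap (x : G) : EuclideanSpace ℂ G →ₗ[ℂ] ℂ where
  toFun v := v x
  map_add' _ _ := rfl
  map_smul' _ _ := rfl

lemma converse_coeff (χ : H ≃* (H →* ℂ)) (f : G → H)
    (hR : ∀ (V : Type) [NormedAddCommGroup V] [InnerProductSpace ℂ V] [FiniteDimensional ℂ V]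
        (ρ : Representation ℂ G V),
        (Nontrivial V ∧
          ∀ U : Submodule ℂ V, (∀ (g : G) (v : V), v ∈ U → ρ g v ∈ U) → U = ⊥ ∨ U = ⊤) →
        (∀ (g : G) (u v : V), (inner ℂ (ρ g u) (ρ g v) : ℂ) = inner ℂ u v) →
        ∀ β : H, β ≠ 1 →
          (∑ x : G, χ β (f x) • ρ x) ∘ₗ LinearMap.adjoint (∑ x : G, χ β (f x) • ρ x)
            = (Fintype.card G : ℂ) • (LinearMap.id : V →ₗ[ℂ] V))
    (β : H) (hβ : β ≠ 1) (α₀ : G) (hα₀ : α₀ ≠ 1) :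
    ∑ y : G, χ β (f (α₀ * y) * (f y)⁻¹) = 0 := by
  set c : G → ℂ := fun α => ∑ y : G, χ β (f (α * y) * (f y)⁻¹) with hc
  have key : (∑ α : G, c α • (reg α : EuclideanSpace ℂ G →ₗ[ℂ] EuclideanSpace ℂ G))
      - (Fintype.card G : ℂ) • LinearMap.id = 0 := by
    apply vanish_of_vanish_on_minimal
    intro S hSinv hSne hSmin v hv
    obtain ⟨hnt, hirr⟩ := resRep_irred S hSinv hSne hSmin
    letI i0 : NormedAddCommGroup (EuclideanSpace ℂ G) := inferInstance
    letI i0' : InnerProductSpace ℂ (EuclideanSpace ℂ G) := inferInstance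
    letI i1 : NormedAddCommGroup S := inferInstance
    letI i2 : InnerProductSpace ℂ S := inferInstance
    letI i3 : FiniteDimensional ℂ S := inferInstance
    have h1 := hR S (resRep S hSinv) ⟨hnt, hirr⟩ (resRep_inner S hSinv) β hβ
    rw [TTstar χ f β (resRep S hSinv) (resRep_inner S hSinv)] at h1
    have h3 := congrArg
      (fun T : (S →ₗ[ℂ] S) => ((T ⟨v, hv⟩ : S) : EuclideanSpace ℂ G)) h1
    have hL : (((∑ α : G, c α • resRep S hSinv α) ⟨v, hv⟩ : S) : EuclideanSpace ℂ G)
        = ∑ α : G, c α • reg α v := by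
      rw [LinearMap.sum_apply]
      rw [show ((∑ α : G, (c α • resRep S hSinv α) ⟨v, hv⟩ : S) : EuclideanSpace ℂ G)
          = S.subtype (∑ α : G, (c α • resRep S hSinv α) ⟨v, hv⟩) from rfl]
      rw [map_sum]
      refine Finset.sum_congr rfl fun α _ => ?_
      rw [LinearMap.smul_apply, map_smul]
      exact congrArg (fun w => c α • w) (resRep_coe S hSinv α ⟨v, hv⟩)
    have hRt : ((((Fintype.card G : ℂ) • (LinearMap.id : S →ₗ[ℂ] S)) ⟨v, hv⟩ : S)
        : EuclideanSpace ℂ G) = (Fintype.card G : ℂ) • v := rfl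
    rw [hL, hRt] at h3
    rw [LinearMap.sub_apply, LinearMap.sum_apply, LinearMap.smul_apply, LinearMap.id_apply]
    rw [Finset.sum_congr rfl fun α _ => LinearMap.smul_apply (c α) (reg α) v]
    rw [h3, sub_self]
  -- evaluate at the delta function at 1, coordinate α₀
  have hz := congrArg (fun T : EuclideanSpace ℂ G →ₗ[ℂ] EuclideanSpace ℂ G =>
    evalMap α₀ (T (EuclideanSpace.single (1 : G) (1 : ℂ)))) key
  rw [LinearMap.sub_apply, LinearMap.sum_apply, LinearMap.smul_apply, LinearMap.id_apply,
    map_sub, map_sum, map_smul, LinearMap.zero_apply, map_zero] at hz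
  have hterm : ∀ α : G, evalMap α₀ ((c α • (reg α : EuclideanSpace ℂ G →ₗ[ℂ]
      EuclideanSpace ℂ G)) (EuclideanSpace.single (1 : G) (1 : ℂ)))
      = c α * (if α⁻¹ * α₀ = 1 then 1 else 0) := by
    intro α
    rw [LinearMap.smul_apply, map_smul, smul_eq_mul]
    congr 1
    show EuclideanSpace.single (1 : G) (1 : ℂ) (α⁻¹ * α₀) = _
    rw [EuclideanSpace.single_apply]
  rw [Finset.sum_congr rfl fun α _ => hterm α] at hz
  rw [Finset.sum_eq_single α₀ (fun α _ hne => by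
      rw [if_neg (fun hcon => hne (by
        have : α * (α⁻¹ * α₀) = α * 1 := congrArg (α * ·) hcon
        rw [← mul_assoc, mul_inv_cancel, one_mul, mul_one] at this; exact this.symm)), mul_zero])
    (fun hcon => absurd (Finset.mem_univ α₀) hcon) ] at hz
  rw [inv_mul_cancel, if_pos rfl, mul_one] at hz
  have hsingle : evalMap α₀ (EuclideanSpace.single (1 : G) (1 : ℂ)) = 0 := by
    show EuclideanSpace.single (1 : G) (1 : ℂ) α₀ = 0
    rw [EuclideanSpace.single_apply, if_neg hα₀]
  rw [hsingle, smul_zero, sub_zero] at hz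
  exact hz

end Conv

section Bal2
variable {G H : Type} [Group G] [Fintype G] [CommGroup H] [Fintype H]

open scoped Classical in
lemma balanced_of_coeff (χ : H ≃* (H →* ℂ)) (D : G → H)
    (hD : ∀ β : H, β ≠ 1 → ∑ x : G, χ β (D x) = 0) : IsBalanced D := by
  intro h0
  have big : ∑ β' : H, ∑ x : G, χ β' (D x * h0⁻¹) = (Fintype.card G : ℂ) := by
    have step : ∀ β' : H, ∑ x : G, χ β' (D x * h0⁻¹)
        = (χ β' h0⁻¹) * ∑ x : G, χ β' (D x) := by
      intro β'
      rw [Finset.mul_sum]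
      exact Finset.sum_congr rfl fun x _ => by rw [map_mul, mul_comm]
    rw [Finset.sum_congr rfl fun β' _ => step β']
    rw [Fintype.sum_eq_single (1 : H) (fun β' hβ' => by rw [hD β' hβ', mul_zero])]
    rw [map_one]
    have h1 : ∀ x : G, ((1 : H →* ℂ)) (D x) = 1 := fun x => rfl
    rw [Finset.sum_congr rfl fun x _ => h1 x, Finset.sum_const, Finset.card_univ,
      nsmul_eq_mul, mul_one]
    show (1 : H →* ℂ) h0⁻¹ * _ = _
    rw [MonoidHom.one_apply, one_mul]
  have big2 : ∑ β' : H, ∑ x : G, χ β' (D x * h0⁻¹)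
      = ((Finset.univ.filter (fun x : G => D x = h0)).card : ℂ) * (Fintype.card H : ℂ) := by
    rw [Finset.sum_comm]
    have step : ∀ x : G, ∑ β' : H, χ β' (D x * h0⁻¹)
        = if D x = h0 then (Fintype.card H : ℂ) else 0 := by
      intro x
      rw [char_orth χ (D x * h0⁻¹)]
      congr 1
      simp [mul_inv_eq_one]
    rw [Finset.sum_congr rfl fun x _ => step x, ← Finset.sum_filter, Finset.sum_const,
      nsmul_eq_mul]
  have hnat : ((Finset.univ.filter (fun x : G => D x = h0)).card * Fintype.card H : ℕ)
      = (Fintype.card G : ℕ) := by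
    have := big2.symm.trans big
    exact_mod_cast this
  have hcard : Nat.card {x : G // D x = h0}
      = (Finset.univ.filter (fun x : G => D x = h0)).card := by
    rw [Nat.card_eq_fintype_card, Fintype.card_subtype]
  rw [hcard]
  exact hnat

end Bal2

theorem stmt12 {G H : Type} [Group G] [Fintype G] [CommGroup H] [Fintype H]
    (χ : H ≃* (H →* ℂ)) (f : G → H) :
    IsPerfectNonlinear f ↔
      ∀ (V : Type) [NormedAddCommGroup V] [InnerProductSpace ℂ V] [FiniteDimensional ℂ V]
        (ρ : Representation ℂ G V),
        (Nontrivial V ∧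
          ∀ U : Submodule ℂ V, (∀ (g : G) (v : V), v ∈ U → ρ g v ∈ U) → U = ⊥ ∨ U = ⊤) →
        (∀ (g : G) (u v : V), (inner ℂ (ρ g u) (ρ g v) : ℂ) = inner ℂ u v) →
        ∀ β : H, β ≠ 1 →
          (∑ x : G, χ β (f x) • ρ x) ∘ₗ LinearMap.adjoint (∑ x : G, χ β (f x) • ρ x)
            = (Fintype.card G : ℂ) • (LinearMap.id : V →ₗ[ℂ] V) := by
  constructor
  · intro hf V _ _ _ ρ _ hinner β hβ
    exact forward_dir χ f hf ρ hinner β hβ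
  · intro hR α hα
    letI := Classical.decEq G
    exact balanced_of_coeff χ _ (fun β hβ => converse_coeff χ f hR β hβ α hα)
end

section
/- Let G be a finite abelian group, H a finite group, f: G → H, and ρ: H → U(W) an irreducible unitary representation of H. Define AC_{f,ρ}: G → End(W) by AC_{f,ρ}(α) = Σ_{x∈G} ρ(f(αx) f(x)⁻¹). Then for every α ∈ G, the vector-valued Fourier transform Σ_{x∈G} χ_α(x) AC_{f,ρ}(x) equals S(α) ∘ S(α)*, where S(α) = Σ_{x∈G} χ_α(x) ρ(f(x)). -/
theorem stmt14 {G H : Type} [CommGroup G] [Fintype G] [Group H] [Fintype H]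
    (χ : G ≃* (G →* ℂ)) (f : G → H)
    {W : Type} [NormedAddCommGroup W] [InnerProductSpace ℂ W] [FiniteDimensional ℂ W]
    (ρ : Representation ℂ H W)
    (hirr : Nontrivial W ∧
      ∀ U : Submodule ℂ W, (∀ (h : H) (w : W), w ∈ U → ρ h w ∈ U) → U = ⊥ ∨ U = ⊤)
    (hunitary : ∀ (h : H) (u v : W), (inner ℂ (ρ h u) (ρ h v) : ℂ) = inner ℂ u v)
    (α : G) :
    (∑ x : G, χ α x • ∑ y : G, ρ (f (x * y) * (f y)⁻¹)) =
      (∑ x : G, χ α x • ρ (f x)) ∘ₗ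
        LinearMap.adjoint (∑ x : G, χ α x • ρ (f x)) := by
  have hadj : ∀ h : H, LinearMap.adjoint (ρ h) = ρ h⁻¹ := by
    intro h
    symm
    rw [LinearMap.eq_adjoint_iff]
    intro u v
    calc (inner ℂ (ρ h⁻¹ u) v : ℂ) = inner ℂ (ρ h (ρ h⁻¹ u)) (ρ h v) := (hunitary h _ _).symm
    _ = inner ℂ u (ρ h v) := by
        rw [show ρ h (ρ h⁻¹ u) = u by
          rw [← Module.End.mul_apply, ← ρ.map_mul, mul_inv_cancel, ρ.map_one, Module.End.one_apply]]
  have hpow : ∀ x : G, (χ α x) ^ Fintype.card G = 1 := by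
    intro x
    rw [← map_pow, pow_card_eq_one, map_one]
  have hne : ∀ x : G, χ α x ≠ 0 := by
    intro x hx
    have := hpow x
    rw [hx, zero_pow Fintype.card_ne_zero] at this
    exact zero_ne_one this
  have hconj : ∀ x : G, starRingEnd ℂ (χ α x) = (χ α x)⁻¹ := by
    intro x
    have habs : ‖χ α x‖ = 1 :=
      Complex.norm_eq_one_of_pow_eq_one (hpow x) Fintype.card_ne_zero
    rw [← Complex.inv_eq_conj habs]
  have hadjS : LinearMap.adjoint (∑ x : G, χ α x • ρ (f x)) =
      ∑ y : G, (χ α y)⁻¹ • ρ (f y)⁻¹ := by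
    rw [map_sum]
    refine Finset.sum_congr rfl fun y _ => ?_
    rw [map_smulₛₗ, hadj, hconj]
  rw [hadjS]
  rw [show ((∑ x : G, χ α x • ρ (f x)) ∘ₗ ∑ y : G, (χ α y)⁻¹ • ρ (f y)⁻¹)
      = (∑ x : G, χ α x • ρ (f x)) * ∑ y : G, (χ α y)⁻¹ • ρ (f y)⁻¹ from rfl,
    Finset.sum_mul]
  simp_rw [Finset.smul_sum, Finset.mul_sum]
  rw [Finset.sum_comm, Finset.sum_comm (γ := G) (f := fun x y =>
    (χ α x • ρ (f x)) * ((χ α y)⁻¹ • ρ (f y)⁻¹))]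
  refine Finset.sum_congr rfl fun y _ => ?_
  refine Fintype.sum_equiv (Equiv.mulRight y) _ _ fun x => ?_
  simp only [Equiv.coe_mulRight]
  rw [ρ.map_mul, map_mul (χ α), smul_mul_smul_comm, mul_inv_cancel_right₀ (hne y)]
end

section
/- Let G be a finite abelian group and H a finite group. If f: G → H is perfect nonlinear, then for every α ∈ G and every nontrivial irreducible unitary representation ρ: H → U(W), we have tr(S(α) ∘ S(α)*) = |G| · dim(W), where S(α) = Σ_{x∈G} χ_α(x) ρ(f(x)). -/
theorem stmt16 {G H : Type} [CommGroup G] [Fintype G] [Group H] [Fintype H]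
    (χ : G ≃* (G →* ℂ)) (f : G → H)
    (hf : IsPerfectNonlinear f)
    {W : Type} [NormedAddCommGroup W] [InnerProductSpace ℂ W] [FiniteDimensional ℂ W]
    (ρ : Representation ℂ H W)
    (hirr : Nontrivial W ∧
      ∀ U : Submodule ℂ W, (∀ (h : H) (w : W), w ∈ U → ρ h w ∈ U) → U = ⊥ ∨ U = ⊤)
    (hunitary : ∀ (h : H) (u v : W), (inner ℂ (ρ h u) (ρ h v) : ℂ) = inner ℂ u v)
    (hρ : ρ ≠ 1) (α : G) :
    LinearMap.trace ℂ W
        ((∑ x : G, χ α x • ρ (f x)) ∘ₗ LinearMap.adjoint (∑ x : G, χ α x • ρ (f x)))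
      = (Fintype.card G : ℂ) * (Module.finrank ℂ W : ℂ) := by
  classical
  obtain ⟨hW, hirrU⟩ := hirr
  -- ρ of inverse composes to identity
  have hinvρ : ∀ (h : H) (w : W), ρ h (ρ h⁻¹ w) = w := by
    intro h w
    have : ρ h * ρ h⁻¹ = 1 := by rw [← map_mul, mul_inv_cancel, map_one]
    calc ρ h (ρ h⁻¹ w) = (ρ h * ρ h⁻¹) w := rfl
      _ = w := by rw [this]; rfl
  -- adjoint of ρ h is ρ h⁻¹
  have hadj : ∀ h : H, LinearMap.adjoint (ρ h : W →ₗ[ℂ] W) = ρ h⁻¹ := by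
    intro h
    symm
    rw [LinearMap.eq_adjoint_iff]
    intro u v
    calc (inner ℂ ((ρ h⁻¹) u) v : ℂ) = inner ℂ (ρ h ((ρ h⁻¹) u)) (ρ h v) := (hunitary h _ _).symm
      _ = inner ℂ u (ρ h v) := by rw [hinvρ]
  -- conjugate of character value
  have hconj : ∀ x : G, (starRingEnd ℂ) (χ α x) = χ α x⁻¹ := by
    intro x
    have hmul : χ α x * χ α x⁻¹ = 1 := by rw [← map_mul, mul_inv_cancel, map_one]
    have hnorm : ‖χ α x‖ = 1 := by
      have hpow : (χ α x) ^ Fintype.card G = 1 := by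
        rw [← map_pow, pow_card_eq_one, map_one]
      have h1 : ‖χ α x‖ ^ Fintype.card G = 1 := by
        rw [← norm_pow, hpow, norm_one]
      have hc : Fintype.card G ≠ 0 := Fintype.card_ne_zero
      have := (pow_left_inj₀ (norm_nonneg (χ α x)) zero_le_one hc).mp (by simpa using h1)
      exact this
    rw [← Complex.inv_eq_conj hnorm]
    exact inv_eq_of_mul_eq_one_right hmul
  -- the sum of all ρ h is the zero operator
  have hsum0 : (∑ h : H, (ρ h : W →ₗ[ℂ] W)) = 0 := by
    set U : Submodule ℂ W :=
      { carrier := {w : W | ∀ h : H, ρ h w = w}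
        add_mem' := fun {a b} ha hb h => by rw [map_add, ha h, hb h]
        zero_mem' := fun h => map_zero _
        smul_mem' := fun c w hw h => by rw [map_smul, hw h] } with hUdef
    have hmemU : ∀ w : W, w ∈ U ↔ ∀ h : H, ρ h w = w := fun w => Iff.rfl
    have hstable : ∀ (h : H) (w : W), w ∈ U → ρ h w ∈ U := by
      intro h w hw
      rw [hmemU] at hw ⊢
      intro h'
      rw [hw h, hw h']
    rcases hirrU U hstable with hbot | htop
    · ext w
      have hmem : (∑ h : H, (ρ h : W →ₗ[ℂ] W)) w ∈ U := by
        rw [hmemU]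
        intro h
        have h1 : ρ h ((∑ h' : H, (ρ h' : W →ₗ[ℂ] W)) w) = ∑ h' : H, ρ (h * h') w := by
          rw [LinearMap.sum_apply, map_sum]
          exact Finset.sum_congr rfl fun h' _ => by rw [map_mul]; rfl
        have h2 : ∑ h' : H, ρ (h * h') w = ∑ h' : H, ρ h' w :=
          Equiv.sum_comp (Equiv.mulLeft h) (fun h' => ρ h' w)
        rw [h1, h2, LinearMap.sum_apply]
      rw [hbot, Submodule.mem_bot] at hmem
      simp [hmem]
    · exfalso
      apply hρ
      ext h w
      have : w ∈ U := htop ▸ Submodule.mem_top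
      exact (hmemU w).mp this h
  -- adjoint of the sum
  have hSadj : LinearMap.adjoint (∑ x : G, χ α x • ρ (f x))
      = ∑ y : G, χ α y⁻¹ • (ρ ((f y)⁻¹) : W →ₗ[ℂ] W) := by
    rw [map_sum]
    refine Finset.sum_congr rfl fun y _ => ?_
    rw [LinearMap.adjoint.map_smulₛₗ, hconj, hadj]
  rw [hSadj]
  -- expand the composition
  have hcomp : (∑ x : G, χ α x • ρ (f x)) ∘ₗ (∑ y : G, χ α y⁻¹ • (ρ ((f y)⁻¹) : W →ₗ[ℂ] W))
      = ∑ x : G, ∑ y : G, (χ α x * χ α y⁻¹) • (ρ (f x * (f y)⁻¹) : W →ₗ[ℂ] W) := by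
    rw [← Module.End.mul_eq_comp, Finset.sum_mul_sum]
    refine Finset.sum_congr rfl fun x _ => Finset.sum_congr rfl fun y _ => ?_
    rw [smul_mul_smul_comm, map_mul]
  rw [hcomp, map_sum]
  have htr : ∀ x : G, LinearMap.trace ℂ W
        (∑ y : G, (χ α x * χ α y⁻¹) • (ρ (f x * (f y)⁻¹) : W →ₗ[ℂ] W))
      = ∑ y : G, (χ α x * χ α y⁻¹) * LinearMap.trace ℂ W (ρ (f x * (f y)⁻¹) : W →ₗ[ℂ] W) := by
    intro x
    rw [map_sum]
    exact Finset.sum_congr rfl fun y _ => by rw [map_smul, smul_eq_mul]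
  rw [Finset.sum_congr rfl fun x _ => htr x]
  rw [Finset.sum_comm]
  -- reindex the inner sum by x = β * y
  have hre : ∀ y : G, (∑ x : G, (χ α x * χ α y⁻¹)
        * LinearMap.trace ℂ W (ρ (f x * (f y)⁻¹) : W →ₗ[ℂ] W))
      = ∑ β : G, χ α β * LinearMap.trace ℂ W (ρ (f (β * y) * (f y)⁻¹) : W →ₗ[ℂ] W) := by
    intro y
    rw [← Equiv.sum_comp (Equiv.mulRight y) (fun x => (χ α x * χ α y⁻¹)
        * LinearMap.trace ℂ W (ρ (f x * (f y)⁻¹) : W →ₗ[ℂ] W))]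
    refine Finset.sum_congr rfl fun β _ => ?_
    simp only [Equiv.coe_mulRight]
    rw [← map_mul (χ α), mul_inv_cancel_right]
  rw [Finset.sum_congr rfl fun y _ => hre y, Finset.sum_comm]
  -- for β ≠ 1, the inner sum vanishes by balancedness
  have hz : ∀ β : G, β ≠ 1 →
      (∑ y : G, LinearMap.trace ℂ W (ρ (f (β * y) * (f y)⁻¹) : W →ₗ[ℂ] W)) = 0 := by
    intro β hβ
    set g : G → H := fun y => f (β * y) * (f y)⁻¹ with hg
    have hb : IsBalanced g := hf β hβ
    have hcard : ∀ h : H, Fintype.card {y : G // g y = h}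
        = Fintype.card G / Fintype.card H := by
      intro h
      have := hb h
      rw [Nat.card_eq_fintype_card] at this
      exact (Nat.div_eq_of_eq_mul_left Fintype.card_pos this.symm).symm
    calc (∑ y : G, LinearMap.trace ℂ W (ρ (g y) : W →ₗ[ℂ] W))
        = ∑ h : H, ∑ _y : {y : G // g y = h}, LinearMap.trace ℂ W (ρ h : W →ₗ[ℂ] W) :=
          (Fintype.sum_fiberwise' g (fun h => LinearMap.trace ℂ W (ρ h : W →ₗ[ℂ] W))).symm
      _ = ∑ h : H, (Fintype.card G / Fintype.card H)
            • LinearMap.trace ℂ W (ρ h : W →ₗ[ℂ] W) := by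
          refine Finset.sum_congr rfl fun h _ => ?_
          rw [Finset.sum_const, Finset.card_univ, hcard h]
      _ = (Fintype.card G / Fintype.card H)
            • LinearMap.trace ℂ W (∑ h : H, (ρ h : W →ₗ[ℂ] W)) := by
          rw [map_sum, ← Finset.smul_sum]
      _ = 0 := by rw [hsum0, map_zero, smul_zero]
  rw [Finset.sum_eq_single (1 : G)
    (fun β _ hβ => by rw [← Finset.mul_sum, hz β hβ, mul_zero])
    (fun h => absurd (Finset.mem_univ 1) h)]
  have hone : ∀ y : G, f (1 * y) * (f y)⁻¹ = 1 := fun y => by rw [one_mul, mul_inv_cancel]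
  rw [map_one]
  calc (∑ y : G, (1 : ℂ) * LinearMap.trace ℂ W (ρ (f (1 * y) * (f y)⁻¹) : W →ₗ[ℂ] W))
      = ∑ _y : G, (Module.finrank ℂ W : ℂ) := by
        refine Finset.sum_congr rfl fun y _ => ?_
        rw [one_mul, hone y, map_one, LinearMap.trace_one]
    _ = (Fintype.card G : ℂ) * (Module.finrank ℂ W : ℂ) := by
        rw [Finset.sum_const, Finset.card_univ, nsmul_eq_mul]
end

section
/- Let G and H be finite groups (both possibly nonabelian), f: G → H, ρ: G → U(V) an irreducible unitary representation of G, and ρ': H → U(W) an irreducible unitary representation of H with matrix coefficients ρ'_{ij} in a fixed orthonormal basis of W. Define AC_{f,ρ',i,j}(α) = Σ_{x∈G} ρ'_{ij}(f(αx)f(x)⁻¹). Then Σ_{α∈G} AC_{f,ρ',i,j}(α) ρ(α) = Σ_{k=1}^{dim W} T_{ik} ∘ (T_{jk})*, where T_{ik} = Σ_{x∈G} ρ'_{ik}(f(x)) ρ(x) ∈ End(V). -/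
theorem stmt17 {G H : Type} [Group G] [Fintype G] [Group H] [Fintype H]
    {V : Type} [NormedAddCommGroup V] [InnerProductSpace ℂ V] [FiniteDimensional ℂ V]
    {W : Type} [NormedAddCommGroup W] [InnerProductSpace ℂ W] [FiniteDimensional ℂ W]
    (ρ : Representation ℂ G V)
    (hρirr : Nontrivial V ∧
      ∀ U : Submodule ℂ V, (∀ (g : G) (v : V), v ∈ U → ρ g v ∈ U) → U = ⊥ ∨ U = ⊤)
    (hρu : ∀ (g : G) (u v : V), (inner ℂ (ρ g u) (ρ g v) : ℂ) = inner ℂ u v)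
    (ρ' : Representation ℂ H W)
    (hρ'irr : Nontrivial W ∧
      ∀ U : Submodule ℂ W, (∀ (h : H) (w : W), w ∈ U → ρ' h w ∈ U) → U = ⊥ ∨ U = ⊤)
    (hρ'u : ∀ (h : H) (u v : W), (inner ℂ (ρ' h u) (ρ' h v) : ℂ) = inner ℂ u v)
    {n : ℕ} (b : OrthonormalBasis (Fin n) ℂ W)
    (f : G → H) (i j : Fin n) :
    -- Fourier transform of the autocorrelation function AC_{f,ρ',i,j}
    (∑ α : G, (∑ x : G, (inner ℂ (b i) (ρ' (f (α * x) * (f x)⁻¹) (b j)) : ℂ)) • ρ α)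
      = ∑ k : Fin n,
          (∑ x : G, (inner ℂ (b i) (ρ' (f x) (b k)) : ℂ) • ρ x) ∘ₗ
            LinearMap.adjoint (∑ x : G, (inner ℂ (b j) (ρ' (f x) (b k)) : ℂ) • ρ x) := by
  classical
  have hcancel : ∀ (h : H) (v : W), ρ' h (ρ' h⁻¹ v) = v := by
    intro h v
    rw [← Module.End.mul_apply, ← map_mul, mul_inv_cancel, map_one, Module.End.one_apply]
  have hcancelG : ∀ (g : G) (v : V), ρ g (ρ g⁻¹ v) = v := by
    intro g v
    rw [← Module.End.mul_apply, ← map_mul, mul_inv_cancel, map_one, Module.End.one_apply]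
  have hadj : ∀ g : G, LinearMap.adjoint (ρ g) = ρ g⁻¹ := by
    intro g
    symm
    rw [LinearMap.eq_adjoint_iff]
    intro u v
    rw [← hρu g (ρ g⁻¹ u) v, hcancelG]
  have hadj' : ∀ (h : H) (u v : W), (inner ℂ (ρ' h⁻¹ u) v : ℂ) = inner ℂ u (ρ' h v) := by
    intro h u v
    rw [← hρ'u h (ρ' h⁻¹ u) v, hcancel]
  -- key scalar identity
  have hkey : ∀ x y : G,
      (∑ k : Fin n, (inner ℂ (b i) (ρ' (f x) (b k)) : ℂ) *
        (starRingEnd ℂ) (inner ℂ (b j) (ρ' (f y) (b k)))) =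
      (inner ℂ (b i) (ρ' (f x * (f y)⁻¹) (b j)) : ℂ) := by
    intro x y
    have h1 : ∀ k : Fin n, (inner ℂ (b i) (ρ' (f x) (b k)) : ℂ) =
        inner ℂ (ρ' (f x)⁻¹ (b i)) (b k) := fun k => (hadj' (f x) (b i) (b k)).symm
    have h2 : ∀ k : Fin n, (starRingEnd ℂ) (inner ℂ (b j) (ρ' (f y) (b k)) : ℂ) =
        inner ℂ (b k) (ρ' (f y)⁻¹ (b j)) := by
      intro k
      have h3 := hadj' (f y)⁻¹ (b k) (b j)
      rw [inv_inv] at h3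
      rw [inner_conj_symm, h3]
    calc (∑ k : Fin n, (inner ℂ (b i) (ρ' (f x) (b k)) : ℂ) *
        (starRingEnd ℂ) (inner ℂ (b j) (ρ' (f y) (b k))))
        = ∑ k : Fin n, (inner ℂ (ρ' (f x)⁻¹ (b i)) (b k) : ℂ) *
            inner ℂ (b k) (ρ' (f y)⁻¹ (b j)) := by
          refine Finset.sum_congr rfl fun k _ => ?_
          rw [h1 k, h2 k]
      _ = inner ℂ (ρ' (f x)⁻¹ (b i)) (ρ' (f y)⁻¹ (b j)) :=
          b.sum_inner_mul_inner _ _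
      _ = inner ℂ (b i) (ρ' (f x * (f y)⁻¹) (b j)) := by
          rw [hadj' (f x) (b i), ← Module.End.mul_apply, ← map_mul]
  -- rewrite RHS
  have hRHS : (∑ k : Fin n,
          (∑ x : G, (inner ℂ (b i) (ρ' (f x) (b k)) : ℂ) • ρ x) ∘ₗ
            LinearMap.adjoint (∑ x : G, (inner ℂ (b j) (ρ' (f x) (b k)) : ℂ) • ρ x))
      = ∑ x : G, ∑ y : G,
          (inner ℂ (b i) (ρ' (f x * (f y)⁻¹) (b j)) : ℂ) • ρ (x * y⁻¹) := by
    have hadjsum : ∀ k : Fin n,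
        LinearMap.adjoint (∑ x : G, (inner ℂ (b j) (ρ' (f x) (b k)) : ℂ) • ρ x)
        = ∑ y : G, ((starRingEnd ℂ) (inner ℂ (b j) (ρ' (f y) (b k))) : ℂ) • ρ y⁻¹ := by
      intro k
      rw [map_sum]
      refine Finset.sum_congr rfl fun y _ => ?_
      rw [LinearEquiv.map_smulₛₗ, hadj]
    calc (∑ k : Fin n,
          (∑ x : G, (inner ℂ (b i) (ρ' (f x) (b k)) : ℂ) • ρ x) ∘ₗ
            LinearMap.adjoint (∑ x : G, (inner ℂ (b j) (ρ' (f x) (b k)) : ℂ) • ρ x))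
        = ∑ k : Fin n, ∑ x : G, ∑ y : G,
            ((inner ℂ (b i) (ρ' (f x) (b k)) : ℂ) *
              (starRingEnd ℂ) (inner ℂ (b j) (ρ' (f y) (b k)))) • ρ (x * y⁻¹) := by
          refine Finset.sum_congr rfl fun k _ => ?_
          rw [hadjsum k, ← Module.End.mul_eq_comp, Finset.sum_mul]
          refine Finset.sum_congr rfl fun x _ => ?_
          rw [Finset.mul_sum]
          refine Finset.sum_congr rfl fun y _ => ?_
          rw [smul_mul_assoc, mul_smul_comm, smul_smul, map_mul]
      _ = ∑ x : G, ∑ k : Fin n, ∑ y : G,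
            ((inner ℂ (b i) (ρ' (f x) (b k)) : ℂ) *
              (starRingEnd ℂ) (inner ℂ (b j) (ρ' (f y) (b k)))) • ρ (x * y⁻¹) :=
          Finset.sum_comm
      _ = ∑ x : G, ∑ y : G, ∑ k : Fin n,
            ((inner ℂ (b i) (ρ' (f x) (b k)) : ℂ) *
              (starRingEnd ℂ) (inner ℂ (b j) (ρ' (f y) (b k)))) • ρ (x * y⁻¹) := by
          exact Finset.sum_congr rfl fun x _ => Finset.sum_comm
      _ = ∑ x : G, ∑ y : G,
          (inner ℂ (b i) (ρ' (f x * (f y)⁻¹) (b j)) : ℂ) • ρ (x * y⁻¹) := by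
          refine Finset.sum_congr rfl fun x _ => Finset.sum_congr rfl fun y _ => ?_
          rw [← Finset.sum_smul, hkey]
  rw [hRHS]
  -- rewrite LHS
  calc (∑ α : G, (∑ x : G, (inner ℂ (b i) (ρ' (f (α * x) * (f x)⁻¹) (b j)) : ℂ)) • ρ α)
      = ∑ α : G, ∑ x : G,
          (inner ℂ (b i) (ρ' (f (α * x) * (f x)⁻¹) (b j)) : ℂ) • ρ α := by
        refine Finset.sum_congr rfl fun α _ => ?_
        rw [Finset.sum_smul]
    _ = ∑ x : G, ∑ α : G,
          (inner ℂ (b i) (ρ' (f (α * x) * (f x)⁻¹) (b j)) : ℂ) • ρ α :=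
        Finset.sum_comm
    _ = ∑ x : G, ∑ z : G,
          (inner ℂ (b i) (ρ' (f z * (f x)⁻¹) (b j)) : ℂ) • ρ (z * x⁻¹) := by
        refine Finset.sum_congr rfl fun x _ => ?_
        exact (Fintype.sum_equiv (Equiv.mulRight x⁻¹)
          (fun z => (inner ℂ (b i) (ρ' (f z * (f x)⁻¹) (b j)) : ℂ) • ρ (z * x⁻¹))
          (fun α => (inner ℂ (b i) (ρ' (f (α * x) * (f x)⁻¹) (b j)) : ℂ) • ρ α)
          (fun z => by simp only [Equiv.coe_mulRight, inv_mul_cancel_right])).symm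
    _ = ∑ z : G, ∑ x : G,
          (inner ℂ (b i) (ρ' (f z * (f x)⁻¹) (b j)) : ℂ) • ρ (z * x⁻¹) :=
        Finset.sum_comm
end

section
/- Let G and H be finite groups. A function f: G → H is perfect nonlinear if and only if for every irreducible unitary representation ρ: G → U(V), every nontrivial irreducible unitary representation ρ': H → U(W), and all indices i, j ∈ {1,…,dim W}, we have Σ_{k=1}^{dim W} T_{ik} ∘ (T_{jk})* = |G|·Id_V if i = j and = 0 if i ≠ j, where T_{ik} = Σ_{x∈G} ρ'_{ik}(f(x)) ρ(x). -/
open scoped InnerProductSpace ComplexConjugate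

/-! ### Auxiliary lemmas -/

lemma PNaux.rep_apply_inv_apply {K V : Type} [Group K] [AddCommMonoid V] [Module ℂ V]
    (ρ : Representation ℂ K V) (k : K) (v : V) : ρ k (ρ k⁻¹ v) = v := by
  rw [← Module.End.mul_apply, ← map_mul, mul_inv_cancel, map_one, Module.End.one_apply]

lemma PNaux.inner_rep_left {K V : Type} [Group K] [NormedAddCommGroup V] [InnerProductSpace ℂ V]
    (ρ : Representation ℂ K V)
    (hρ : ∀ (g : K) (u v : V), (inner ℂ (ρ g u) (ρ g v) : ℂ) = inner ℂ u v)
    (g : K) (u v : V) : ⟪ρ g u, v⟫_ℂ = ⟪u, ρ g⁻¹ v⟫_ℂ := by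
  rw [← hρ g u (ρ g⁻¹ v), PNaux.rep_apply_inv_apply]

lemma PNaux.adjoint_rep {K V : Type} [Group K] [NormedAddCommGroup V] [InnerProductSpace ℂ V]
    [FiniteDimensional ℂ V] (ρ : Representation ℂ K V)
    (hρ : ∀ (g : K) (u v : V), (inner ℂ (ρ g u) (ρ g v) : ℂ) = inner ℂ u v)
    (g : K) : LinearMap.adjoint (ρ g : V →ₗ[ℂ] V) = (ρ g⁻¹ : V →ₗ[ℂ] V) := by
  symm
  rw [LinearMap.eq_adjoint_iff]
  intro x y
  rw [PNaux.inner_rep_left ρ hρ g⁻¹, inv_inv]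

/-- fiberwise counting -/
lemma PNaux.sum_comp_nsmul {X H' : Type} [Fintype X] [Fintype H'] [DecidableEq H']
    {M : Type} [AddCommMonoid M] (D : X → H') (F : H' → M) :
    ∑ x, F (D x) = ∑ h, Nat.card {x // D x = h} • F h := by
  rw [← Fintype.sum_fiberwise D (fun x => F (D x))]
  refine Finset.sum_congr rfl fun h _ => ?_
  have h1 : ∀ a : {x // D x = h}, F (D (a : X)) = F h := fun a => by rw [a.2]
  rw [Fintype.sum_congr _ _ h1, Finset.sum_const, Finset.card_univ, Nat.card_eq_fintype_card]

/-- Sum over the group of a nontrivial irreducible representation is zero. -/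
lemma PNaux.sum_rep_eq_zero {K W : Type} [Group K] [Fintype K] [AddCommGroup W] [Module ℂ W]
    (ρ : Representation ℂ K W)
    (hirr : ∀ U : Submodule ℂ W, (∀ (k : K) (w : W), w ∈ U → ρ k w ∈ U) → U = ⊥ ∨ U = ⊤)
    (hne : ρ ≠ 1) : (∑ h : K, (ρ h : W →ₗ[ℂ] W)) = 0 := by
  set P : W →ₗ[ℂ] W := ∑ h : K, (ρ h : W →ₗ[ℂ] W) with hP
  have hcomp : ∀ k : K, ρ k * P = P := by
    intro k
    rw [hP, Finset.mul_sum]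
    exact Fintype.sum_equiv (Equiv.mulLeft k) _ _ (fun h => by simp [← map_mul])
  have hinv : ∀ (k : K) (w : W), w ∈ LinearMap.range P → ρ k w ∈ LinearMap.range P := by
    rintro k w ⟨v, rfl⟩
    exact ⟨v, by rw [← Module.End.mul_apply, hcomp]⟩
  rcases hirr _ hinv with h | h
  · exact LinearMap.range_eq_bot.1 h
  · exfalso
    apply hne
    ext k w
    have hw : w ∈ LinearMap.range P := h ▸ Submodule.mem_top
    obtain ⟨v, rfl⟩ := hw
    show ρ k (P v) = (1 : Representation ℂ K W) k (P v)
    rw [← Module.End.mul_apply, hcomp]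
    rfl

/-- The regular representation on `EuclideanSpace ℂ K`. -/
noncomputable def PNaux.regRep (K : Type) [Group K] [Fintype K] [DecidableEq K] :
    Representation ℂ K (EuclideanSpace ℂ K) where
  toFun k :=
    { toFun := fun v => (WithLp.toLp 2 (fun x => v (k⁻¹ * x)) : EuclideanSpace ℂ K)
      map_add' := fun u v => rfl
      map_smul' := fun c v => rfl }
  map_one' := by
    ext v x
    show v (1⁻¹ * x) = v x
    rw [inv_one, one_mul]
  map_mul' := by
    intro a b
    ext v x
    show v ((a*b)⁻¹ * x) = v (b⁻¹ * (a⁻¹ * x))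
    rw [mul_inv_rev, mul_assoc]

lemma PNaux.regRep_apply {K : Type} [Group K] [Fintype K] [DecidableEq K] (k : K)
    (v : EuclideanSpace ℂ K) (x : K) : PNaux.regRep K k v x = v (k⁻¹ * x) := rfl

lemma PNaux.regRep_unitary {K : Type} [Group K] [Fintype K] [DecidableEq K] (k : K)
    (u v : EuclideanSpace ℂ K) : (inner ℂ (PNaux.regRep K k u) (PNaux.regRep K k v) : ℂ) = inner ℂ u v := by
  simp only [PiLp.inner_apply, PNaux.regRep_apply, RCLike.inner_apply]
  exact Fintype.sum_equiv (Equiv.mulLeft k⁻¹) _ _ (fun x => rfl)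

lemma PNaux.key_extract {K : Type} [Group K] [Fintype K] [DecidableEq K] (c : K → ℂ)
    (h0 : (∑ k, c k • (PNaux.regRep K k : EuclideanSpace ℂ K →ₗ[ℂ] EuclideanSpace ℂ K)) = 0) :
    ∀ k, c k = 0 := by
  intro k0
  have h1 := congrArg (fun A : EuclideanSpace ℂ K →ₗ[ℂ] EuclideanSpace ℂ K =>
    (EuclideanSpace.proj k0 : EuclideanSpace ℂ K →L[ℂ] ℂ) (A (EuclideanSpace.single 1 1))) h0
  simp only [LinearMap.sum_apply, LinearMap.smul_apply, LinearMap.zero_apply, map_sum, map_smul,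
    map_zero, PiLp.proj_apply, smul_eq_mul] at h1
  have h2 : ∀ k : K, (PNaux.regRep K k (EuclideanSpace.single 1 (1:ℂ))) k0
      = if k = k0 then 1 else 0 := by
    intro k
    rw [PNaux.regRep_apply, EuclideanSpace.single_apply]
    congr 1
    simp [inv_mul_eq_one, eq_comm]
  simp only [h2, mul_ite, mul_one, mul_zero, Finset.sum_ite_eq', Finset.mem_univ, if_true] at h1
  exact h1

noncomputable def PNaux.restrictRep {K V : Type} [Group K] [NormedAddCommGroup V]
    [InnerProductSpace ℂ V]
    (ρ : Representation ℂ K V) (U : Submodule ℂ V) (hU : ∀ (k : K) (v : V), v ∈ U → ρ k v ∈ U) :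
    Representation ℂ K U where
  toFun k := (ρ k).restrict (fun v hv => hU k v hv)
  map_one' := by
    ext v
    simp [LinearMap.restrict_apply]
  map_mul' := by
    intro a b
    ext v
    simp [LinearMap.restrict_apply, Module.End.mul_apply]

lemma PNaux.restrictRep_coe {K V : Type} [Group K] [NormedAddCommGroup V] [InnerProductSpace ℂ V]
    (ρ : Representation ℂ K V) (U : Submodule ℂ V) (hU : ∀ (k : K) (v : V), v ∈ U → ρ k v ∈ U)
    (k : K) (v : U) : (PNaux.restrictRep ρ U hU k v : V) = ρ k (v : V) := rfl

lemma PNaux.restrictRep_unitary {K V : Type} [Group K] [NormedAddCommGroup V]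
    [InnerProductSpace ℂ V]
    (ρ : Representation ℂ K V) (U : Submodule ℂ V) (hU : ∀ (k : K) (v : V), v ∈ U → ρ k v ∈ U)
    (hρ : ∀ (k : K) (u v : V), (inner ℂ (ρ k u) (ρ k v) : ℂ) = inner ℂ u v)
    (k : K) (u v : U) :
    (inner ℂ (PNaux.restrictRep ρ U hU k u) (PNaux.restrictRep ρ U hU k v) : ℂ) = inner ℂ u v := by
  rw [Submodule.coe_inner, Submodule.coe_inner, PNaux.restrictRep_coe, PNaux.restrictRep_coe]
  exact hρ k u v

lemma PNaux.key_aux {K : Type} [Group K] [Fintype K] (c : K → ℂ)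
    (hirr : ∀ (V : Type) [NormedAddCommGroup V] [InnerProductSpace ℂ V] [FiniteDimensional ℂ V]
      (ρ : Representation ℂ K V),
      (Nontrivial V ∧ ∀ U : Submodule ℂ V, (∀ (k : K) (v : V), v ∈ U → ρ k v ∈ U) → U = ⊥ ∨ U = ⊤) →
      (∀ (k : K) (u v : V), (inner ℂ (ρ k u) (ρ k v) : ℂ) = inner ℂ u v) →
      (∑ k, c k • (ρ k : V →ₗ[ℂ] V)) = 0) :
    ∀ (n : ℕ) (V : Type) [NormedAddCommGroup V] [InnerProductSpace ℂ V] [FiniteDimensional ℂ V],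
      Module.finrank ℂ V = n → ∀ ρ : Representation ℂ K V,
      (∀ (k : K) (u v : V), (inner ℂ (ρ k u) (ρ k v) : ℂ) = inner ℂ u v) →
      (∑ k, c k • (ρ k : V →ₗ[ℂ] V)) = 0 := by
  intro n
  induction n using Nat.strong_induction_on with
  | _ n ih =>
  intro V _ _ _ hrank ρ hρ
  rcases subsingleton_or_nontrivial V with hV | hV
  · apply LinearMap.ext; intro v; exact Subsingleton.elim _ _
  by_cases hir : ∀ U : Submodule ℂ V, (∀ (k : K) (v : V), v ∈ U → ρ k v ∈ U) → U = ⊥ ∨ U = ⊤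
  · exact hirr V ρ ⟨hV, hir⟩ hρ
  push_neg at hir
  obtain ⟨U, hUinv, hUbot, hUtop⟩ := hir
  have hUc : ∀ (k : K) (v : V), v ∈ Uᗮ → ρ k v ∈ Uᗮ := by
    intro k v hv
    rw [Submodule.mem_orthogonal] at hv ⊢
    intro w hw
    have h1 : (inner ℂ w (ρ k v) : ℂ) = inner ℂ (ρ k⁻¹ w) v := by
      conv_lhs => rw [← PNaux.rep_apply_inv_apply ρ k w]
      exact hρ k _ _
    rw [h1]
    exact hv _ (hUinv k⁻¹ w hw)
  have hlt1 : Module.finrank ℂ U < n := by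
    rw [← hrank]; exact Submodule.finrank_lt hUtop
  have hlt2 : Module.finrank ℂ ↥Uᗮ < n := by
    have h2 := Submodule.finrank_add_finrank_orthogonal U
    have h3 : Module.finrank ℂ U ≠ 0 := fun h => hUbot (Submodule.finrank_eq_zero.1 h)
    omega
  have h1 := ih _ hlt1 U rfl (PNaux.restrictRep ρ U hUinv) (PNaux.restrictRep_unitary ρ U hUinv hρ)
  have h2 := ih _ hlt2 ↥Uᗮ rfl (PNaux.restrictRep ρ Uᗮ hUc) (PNaux.restrictRep_unitary ρ Uᗮ hUc hρ)
  have happ : ∀ (U' : Submodule ℂ V) (hinv : ∀ (k : K) (v : V), v ∈ U' → ρ k v ∈ U'),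
      (∑ k, c k • ((PNaux.restrictRep ρ U' hinv k) : U' →ₗ[ℂ] U')) = 0 →
      ∀ u ∈ U', (∑ k, c k • (ρ k : V →ₗ[ℂ] V)) u = 0 := by
    intro U' hinv hz u hu
    have h4 := congrArg (fun A : U' →ₗ[ℂ] U' => (A ⟨u, hu⟩ : V)) hz
    simp only [LinearMap.sum_apply, LinearMap.smul_apply, LinearMap.zero_apply,
      Submodule.coe_sum, Submodule.coe_smul, PNaux.restrictRep_coe, Submodule.coe_zero] at h4
    simpa [LinearMap.sum_apply, LinearMap.smul_apply] using h4
  apply LinearMap.ext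
  intro v
  obtain ⟨u, hu, w, hw, rfl⟩ := U.exists_add_mem_mem_orthogonal v
  rw [map_add, happ U hUinv h1 u hu, happ Uᗮ hUc h2 w hw, add_zero, LinearMap.zero_apply]

/-- KEY: a coefficient function annihilating all irreducible unitary reps vanishes. -/
lemma PNaux.key {K : Type} [Group K] [Fintype K] (c : K → ℂ)
    (hirr : ∀ (V : Type) [NormedAddCommGroup V] [InnerProductSpace ℂ V] [FiniteDimensional ℂ V]
      (ρ : Representation ℂ K V),
      (Nontrivial V ∧ ∀ U : Submodule ℂ V, (∀ (k : K) (v : V), v ∈ U → ρ k v ∈ U) → U = ⊥ ∨ U = ⊤) →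
      (∀ (k : K) (u v : V), (inner ℂ (ρ k u) (ρ k v) : ℂ) = inner ℂ u v) →
      (∑ k, c k • (ρ k : V →ₗ[ℂ] V)) = 0) :
    ∀ k, c k = 0 := by
  classical
  exact PNaux.key_extract c
    (PNaux.key_aux c hirr _ (EuclideanSpace ℂ K) rfl (PNaux.regRep K) (PNaux.regRep_unitary))

lemma PNaux.coeff_sum {H W : Type} [Group H] [NormedAddCommGroup W] [InnerProductSpace ℂ W]
    (ρ' : Representation ℂ H W)
    (hρ' : ∀ (h : H) (u v : W), (inner ℂ (ρ' h u) (ρ' h v) : ℂ) = inner ℂ u v)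
    {n : ℕ} (b : OrthonormalBasis (Fin n) ℂ W) (i j : Fin n) (h₁ h₂ : H) :
    ∑ k : Fin n, ⟪b i, ρ' h₁ (b k)⟫_ℂ * conj ⟪b j, ρ' h₂ (b k)⟫_ℂ
      = ⟪b i, ρ' (h₁ * h₂⁻¹) (b j)⟫_ℂ := by
  have e1 : ∀ k, ⟪b i, ρ' h₁ (b k)⟫_ℂ = ⟪ρ' h₁⁻¹ (b i), b k⟫_ℂ := by
    intro k
    rw [PNaux.inner_rep_left ρ' hρ' h₁⁻¹, inv_inv]
  have e2 : ∀ k, conj ⟪b j, ρ' h₂ (b k)⟫_ℂ = ⟪b k, ρ' h₂⁻¹ (b j)⟫_ℂ := by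
    intro k
    rw [← inner_conj_symm, PNaux.inner_rep_left ρ' hρ' h₂, Complex.conj_conj]
  simp only [e1, e2]
  rw [b.sum_inner_mul_inner]
  rw [PNaux.inner_rep_left ρ' hρ' h₁⁻¹, inv_inv, ← Module.End.mul_apply, ← map_mul]

lemma PNaux.Talg {G H : Type} [Group G] [Fintype G] [Group H] [Fintype H] (f : G → H)
    {V W : Type} [NormedAddCommGroup V] [InnerProductSpace ℂ V] [FiniteDimensional ℂ V]
    [NormedAddCommGroup W] [InnerProductSpace ℂ W] [FiniteDimensional ℂ W]
    (ρ : Representation ℂ G V)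
    (hρ : ∀ (g : G) (u v : V), (inner ℂ (ρ g u) (ρ g v) : ℂ) = inner ℂ u v)
    (ρ' : Representation ℂ H W)
    (hρ' : ∀ (h : H) (u v : W), (inner ℂ (ρ' h u) (ρ' h v) : ℂ) = inner ℂ u v)
    {n : ℕ} (b : OrthonormalBasis (Fin n) ℂ W) (i j : Fin n) :
    (∑ k : Fin n,
        (∑ x : G, (inner ℂ (b i) (ρ' (f x) (b k)) : ℂ) • ρ x) ∘ₗ
          LinearMap.adjoint (∑ x : G, (inner ℂ (b j) (ρ' (f x) (b k)) : ℂ) • ρ x))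
      = ∑ α : G, (∑ y : G, (inner ℂ (b i) (ρ' (f (α * y) * (f y)⁻¹) (b j)) : ℂ))
          • (ρ α : V →ₗ[ℂ] V) := by
  have hadj : ∀ k : Fin n, LinearMap.adjoint (∑ x : G, ⟪b j, ρ' (f x) (b k)⟫_ℂ • (ρ x : V →ₗ[ℂ] V))
      = ∑ y : G, conj ⟪b j, ρ' (f y) (b k)⟫_ℂ • (ρ y⁻¹ : V →ₗ[ℂ] V) := by
    intro k
    rw [map_sum]
    refine Finset.sum_congr rfl fun y _ => ?_
    rw [map_smulₛₗ, PNaux.adjoint_rep ρ hρ]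
  calc (∑ k : Fin n,
        (∑ x : G, ⟪b i, ρ' (f x) (b k)⟫_ℂ • ρ x) ∘ₗ
          LinearMap.adjoint (∑ x : G, ⟪b j, ρ' (f x) (b k)⟫_ℂ • ρ x))
      = ∑ k : Fin n, ∑ x : G, ∑ y : G,
          (⟪b i, ρ' (f x) (b k)⟫_ℂ * conj ⟪b j, ρ' (f y) (b k)⟫_ℂ) • (ρ (x * y⁻¹) : V →ₗ[ℂ] V) := by
        refine Finset.sum_congr rfl fun k _ => ?_
        rw [hadj k, ← Module.End.mul_eq_comp, Finset.sum_mul_sum]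
        refine Finset.sum_congr rfl fun x _ => Finset.sum_congr rfl fun y _ => ?_
        rw [smul_mul_assoc, mul_smul_comm, smul_smul, ← map_mul]
    _ = ∑ x : G, ∑ y : G, ⟪b i, ρ' (f x * (f y)⁻¹) (b j)⟫_ℂ • (ρ (x * y⁻¹) : V →ₗ[ℂ] V) := by
        rw [Finset.sum_comm]
        refine Finset.sum_congr rfl fun x _ => ?_
        rw [Finset.sum_comm]
        refine Finset.sum_congr rfl fun y _ => ?_
        rw [← Finset.sum_smul, PNaux.coeff_sum ρ' hρ' b i j]
    _ = ∑ y : G, ∑ α : G, ⟪b i, ρ' (f (α * y) * (f y)⁻¹) (b j)⟫_ℂ • (ρ α : V →ₗ[ℂ] V) := by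
        rw [Finset.sum_comm]
        refine Finset.sum_congr rfl fun y _ => ?_
        refine Fintype.sum_equiv (Equiv.mulRight y⁻¹) _ _ fun x => ?_
        simp only [Equiv.coe_mulRight]
        rw [inv_mul_cancel_right]
    _ = ∑ α : G, (∑ y : G, ⟪b i, ρ' (f (α * y) * (f y)⁻¹) (b j)⟫_ℂ) • (ρ α : V →ₗ[ℂ] V) := by
        rw [Finset.sum_comm]
        exact Finset.sum_congr rfl fun α _ => (Finset.sum_smul).symm

theorem stmt18 {G H : Type} [Group G] [Fintype G] [Group H] [Fintype H]
    (f : G → H) :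
    IsPerfectNonlinear f ↔
      ∀ (V : Type) [NormedAddCommGroup V] [InnerProductSpace ℂ V] [FiniteDimensional ℂ V]
        (W : Type) [NormedAddCommGroup W] [InnerProductSpace ℂ W] [FiniteDimensional ℂ W]
        (ρ : Representation ℂ G V),
        (Nontrivial V ∧
          ∀ U : Submodule ℂ V, (∀ (g : G) (v : V), v ∈ U → ρ g v ∈ U) → U = ⊥ ∨ U = ⊤) →
        (∀ (g : G) (u v : V), (inner ℂ (ρ g u) (ρ g v) : ℂ) = inner ℂ u v) →
        ∀ (ρ' : Representation ℂ H W),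
        (Nontrivial W ∧
          ∀ U : Submodule ℂ W, (∀ (h : H) (w : W), w ∈ U → ρ' h w ∈ U) → U = ⊥ ∨ U = ⊤) →
        (∀ (h : H) (u v : W), (inner ℂ (ρ' h u) (ρ' h v) : ℂ) = inner ℂ u v) →
        ρ' ≠ 1 →
        ∀ {n : ℕ} (b : OrthonormalBasis (Fin n) ℂ W) (i j : Fin n),
          (∑ k : Fin n,
              (∑ x : G, (inner ℂ (b i) (ρ' (f x) (b k)) : ℂ) • ρ x) ∘ₗ
                LinearMap.adjoint (∑ x : G, (inner ℂ (b j) (ρ' (f x) (b k)) : ℂ) • ρ x))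
            = if i = j then (Fintype.card G : ℂ) • (LinearMap.id : V →ₗ[ℂ] V) else 0 := by
  classical
  constructor
  · -- forward direction
    intro hPN V _ _ _ W _ _ _ ρ hVirr hρ ρ' hWirr hρ' hne n b i j
    rw [PNaux.Talg f ρ hρ ρ' hρ' b i j]
    rw [Finset.sum_eq_single 1]
    · -- the α = 1 term
      have hc1 : ∀ y : G, (inner ℂ (b i) (ρ' (f (1 * y) * (f y)⁻¹) (b j)) : ℂ)
          = if i = j then 1 else 0 := by
        intro y
        rw [one_mul, mul_inv_cancel, map_one]
        exact orthonormal_iff_ite.mp b.orthonormal i j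
      simp only [hc1, Finset.sum_const, Finset.card_univ, nsmul_eq_mul, map_one]
      split_ifs with hij
      · simp [Module.End.one_eq_id]
      · simp
    · -- other terms vanish
      intro α _ hα
      have hbal := hPN α hα
      set D : G → H := fun x => f (α * x) * (f x)⁻¹ with hD
      have hzero : (∑ y : G, (inner ℂ (b i) (ρ' (D y) (b j)) : ℂ)) = 0 := by
        rw [PNaux.sum_comp_nsmul D (fun h => (inner ℂ (b i) (ρ' h (b j)) : ℂ))]
        have hNall : ∀ h : H, Nat.card {x // D x = h} = Nat.card {x // D x = 1} := by
          intro h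
          have := hbal h
          have h2 := hbal 1
          exact Nat.eq_of_mul_eq_mul_right Fintype.card_pos (by rw [this, h2])
        calc ∑ h : H, Nat.card {x // D x = h} • (inner ℂ (b i) (ρ' h (b j)) : ℂ)
            = Nat.card {x // D x = 1} • ∑ h : H, (inner ℂ (b i) (ρ' h (b j)) : ℂ) := by
              rw [Finset.smul_sum]
              exact Finset.sum_congr rfl fun h _ => by rw [hNall h]
          _ = 0 := by
              rw [← inner_sum]
              have hs : (∑ h : H, ρ' h (b j)) = 0 := by
                have := PNaux.sum_rep_eq_zero ρ' hWirr.2 hne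
                calc (∑ h : H, ρ' h (b j)) = (∑ h : H, (ρ' h : W →ₗ[ℂ] W)) (b j) := by
                      rw [LinearMap.sum_apply]
                  _ = 0 := by rw [this]; rfl
              rw [hs, inner_zero_right, smul_zero]
      rw [show (∑ y : G, (inner ℂ (b i) (ρ' (f (α * y) * (f y)⁻¹) (b j)) : ℂ)) = 0 from hzero,
        zero_smul]
    · intro h1
      exact absurd (Finset.mem_univ 1) h1
  · -- backward direction
    intro hyp α hα h0
    set D : G → H := fun x => f (α * x) * (f x)⁻¹ with hD
    set q : ℂ := (Fintype.card G : ℂ) / (Fintype.card H : ℂ) with hq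
    set φ : H → ℂ := fun h => (Nat.card {x // D x = h} : ℂ) - q with hφ
    have hHne : (Fintype.card H : ℂ) ≠ 0 := Nat.cast_ne_zero.2 Fintype.card_ne_zero
    -- total count
    have htot : (∑ h : H, (Nat.card {x // D x = h} : ℂ)) = (Fintype.card G : ℂ) := by
      have h5 := PNaux.sum_comp_nsmul D (fun _ => (1 : ℂ))
      simp only [nsmul_eq_mul, mul_one, Finset.sum_const, Finset.card_univ, smul_eq_mul] at h5
      exact h5.symm
    -- core step: the twisted sum over G of any nontrivial irreducible unitary rep vanishes
    have hS : ∀ (W : Type) [NormedAddCommGroup W] [InnerProductSpace ℂ W] [FiniteDimensional ℂ W]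
        (ρ' : Representation ℂ H W),
        (Nontrivial W ∧
          ∀ U : Submodule ℂ W, (∀ (h : H) (w : W), w ∈ U → ρ' h w ∈ U) → U = ⊥ ∨ U = ⊤) →
        (∀ (h : H) (u v : W), (inner ℂ (ρ' h u) (ρ' h v) : ℂ) = inner ℂ u v) →
        ρ' ≠ 1 → (∑ x : G, (ρ' (D x) : W →ₗ[ℂ] W)) = 0 := by
      intro W _ _ _ ρ' hWirr hρ' hne
      set b := stdOrthonormalBasis ℂ W with hb
      have hent : ∀ i j, (∑ x : G, ⟪b i, ρ' (D x) (b j)⟫_ℂ) = 0 := by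
        intro i j
        set c : G → ℂ := fun β => (∑ y : G, ⟪b i, ρ' (f (β * y) * (f y)⁻¹) (b j)⟫_ℂ)
          - (if i = j then (Fintype.card G : ℂ) else 0) * (if β = 1 then 1 else 0) with hc
        have hkey := PNaux.key c ?_
        · have h1 := hkey α
          rw [hc] at h1
          simp only [if_neg hα, mul_zero, sub_zero] at h1
          exact h1
        · intro V _ _ _ ρ hVirr hρ
          have hT := hyp V W ρ hVirr hρ ρ' hWirr hρ' hne b i j
          rw [PNaux.Talg f ρ hρ ρ' hρ' b i j] at hT
          have hsplit : (∑ β : G, c β • (ρ β : V →ₗ[ℂ] V))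
              = (∑ β : G, (∑ y : G, ⟪b i, ρ' (f (β * y) * (f y)⁻¹) (b j)⟫_ℂ) • (ρ β : V →ₗ[ℂ] V))
                - (∑ β : G, ((if i = j then (Fintype.card G : ℂ) else 0) *
                    (if β = 1 then 1 else 0)) • (ρ β : V →ₗ[ℂ] V)) := by
            rw [← Finset.sum_sub_distrib]
            exact Finset.sum_congr rfl fun β _ => by rw [hc, sub_smul]
          rw [hsplit, hT]
          have hone : (∑ β : G, ((if i = j then (Fintype.card G : ℂ) else 0) *
              (if β = 1 then 1 else 0)) • (ρ β : V →ₗ[ℂ] V))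
              = if i = j then (Fintype.card G : ℂ) • (LinearMap.id : V →ₗ[ℂ] V) else 0 := by
            have : ∀ β : G, ((if i = j then (Fintype.card G : ℂ) else 0) *
                (if β = 1 then 1 else 0)) • (ρ β : V →ₗ[ℂ] V)
                = if β = 1 then (if i = j then (Fintype.card G : ℂ) else 0) • (ρ β : V →ₗ[ℂ] V)
                  else 0 := by
              intro β
              split_ifs <;> simp
            rw [Fintype.sum_congr _ _ this, Finset.sum_ite_eq' Finset.univ (1 : G)]
            simp only [Finset.mem_univ, if_true, map_one]
            split_ifs with hij
            · rw [Module.End.one_eq_id]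
            · rw [zero_smul]
          rw [hone, sub_self]
      -- now assemble: all matrix entries vanish
      have hSv : ∀ j, (∑ x : G, (ρ' (D x) : W →ₗ[ℂ] W)) (b j) = 0 := by
        intro j
        rw [LinearMap.sum_apply]
        have hrepr := b.sum_repr' (∑ x : G, ρ' (D x) (b j))
        rw [← hrepr]
        refine Finset.sum_eq_zero fun i _ => ?_
        rw [inner_sum]
        rw [hent i j, zero_smul]
      apply LinearMap.ext
      intro v
      conv_lhs => rw [← b.sum_repr' v]
      rw [map_sum, LinearMap.zero_apply]
      refine Finset.sum_eq_zero fun j _ => ?_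
      rw [map_smul, hSv j, smul_zero]
    -- apply KEY to φ
    have hφ0 : ∀ h, φ h = 0 := by
      refine PNaux.key φ ?_
      intro W _ _ _ ρ' hWirr hρ'
      by_cases hne : ρ' = 1
      · subst hne
        have hφsum : (∑ h : H, φ h) = 0 := by
          simp only [hφ, Finset.sum_sub_distrib, htot, Finset.sum_const, Finset.card_univ,
            nsmul_eq_mul, hq]
          rw [mul_div_cancel₀ _ hHne, sub_self]
        calc (∑ h : H, φ h • ((1 : Representation ℂ H W) h : W →ₗ[ℂ] W))
            = (∑ h : H, φ h) • (1 : W →ₗ[ℂ] W) := by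
              rw [Finset.sum_smul]
              rfl
          _ = 0 := by rw [hφsum, zero_smul]
      · have hS0 := hS W ρ' hWirr hρ' hne
        have hsum0 := PNaux.sum_rep_eq_zero ρ' hWirr.2 hne
        have hς : (∑ h : H, ((Nat.card {x // D x = h} : ℂ)) • (ρ' h : W →ₗ[ℂ] W)) = 0 := by
          calc (∑ h : H, ((Nat.card {x // D x = h} : ℂ)) • (ρ' h : W →ₗ[ℂ] W))
              = ∑ h : H, (Nat.card {x // D x = h}) • (ρ' h : W →ₗ[ℂ] W) :=
                Finset.sum_congr rfl fun h _ => Nat.cast_smul_eq_nsmul ℂ _ _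
            _ = ∑ x : G, (ρ' (D x) : W →ₗ[ℂ] W) := (PNaux.sum_comp_nsmul D _).symm
            _ = 0 := hS0
        calc (∑ h : H, φ h • (ρ' h : W →ₗ[ℂ] W))
            = (∑ h : H, ((Nat.card {x // D x = h} : ℂ)) • (ρ' h : W →ₗ[ℂ] W))
              - q • (∑ h : H, (ρ' h : W →ₗ[ℂ] W)) := by
              rw [Finset.smul_sum, ← Finset.sum_sub_distrib]
              exact Finset.sum_congr rfl fun h _ => by rw [hφ, sub_smul]
          _ = 0 := by rw [hς, hsum0, smul_zero, sub_self]
    -- conclude balancedness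
    have h1 := hφ0 h0
    rw [hφ] at h1
    have h2 : (Nat.card {x // D x = h0} : ℂ) = q := sub_eq_zero.1 h1
    have h3 : ((Nat.card {x // D x = h0} * Fintype.card H : ℕ) : ℂ)
        = ((Fintype.card G : ℕ) : ℂ) := by
      push_cast
      rw [h2, hq, div_mul_cancel₀ _ hHne]
    exact Nat.cast_injective h3
end
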